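/- Let d ∈ ℕ, let β : {0,…,d} → ℝ≥0 satisfy β(0) = β(d) = 0, β(i) > 0 for 0 < i < d, and the concavity condition β(i) ≥ (β(i-j)+β(i+j))/2 for all 0 < i < d and 0 < j ≤ min(i, d-i). Let H be a set, let A be a linear operator on real-valued functions on H with A(1) = 1 which is monotone (f ≤ g implies A f ≤ A g), and let f₀,…,f_d : H → ℝ>0 with f₀ = f_d = 1 satisfy A(f_i^{β_i}) ≤ a·f_i^{β_i} + ω^{2β_i} · max_{0<j≤min(d-i,i)} (√(f_{i+j} f_{i-j}))^{β_i} for i = 1,…,d-1, where β_i = 1/β(i) and a, ω > 0. Then for every a' > a there exist constants ω₀,…,ω_d > 0 and C₀ > 1 such that the function f := Σ_{i=0}^{d} (ω_i f_i)^{β_i} satisfies (A f)(h) ≤ a'·f(h) + C₀ for all h ∈ H. -/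

import Mathlib

set_option maxHeartbeats 1600000


/-- Proposition 4.1 of Kadyrov–Kleinbock–Lindenstrauss–Margulis: let `β : {0,…,d} → ℝ≥0`
vanish at the endpoints, be positive in between and midpoint-concave, let `A` be a linear
monotone operator on functions `H → ℝ` with `A 1 = 1`, and let `f₀,…,f_d : H → ℝ>0` with
`f₀ = f_d = 1` satisfy the system of integral inequalities
`A(f_i^{β_i}) ≤ a f_i^{β_i} + ω^{2β_i} max_{0<j≤min(d-i,i)} (√(f_{i+j} f_{i-j}))^{β_i}`
(with `β_i = 1/β(i)`).  Then for every `a' > a` there are `ω₀,…,ω_d > 0` and `C₀ > 1`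
such that `f := Σ_{i=0}^d (ω_i f_i)^{β_i}` satisfies `A f ≤ a' f + C₀` pointwise. -/
theorem height_function_construction
    (d : ℕ) (hd : 1 ≤ d) (β : ℕ → ℝ)
    (hβ0 : β 0 = 0) (hβd : β d = 0)
    (hβpos : ∀ i, 0 < i → i < d → 0 < β i)
    (hβconc : ∀ i j : ℕ, 0 < i → i < d → 0 < j → j ≤ min i (d - i) →
      (β (i - j) + β (i + j)) / 2 ≤ β i)
    (H : Type*) (A : (H → ℝ) →ₗ[ℝ] (H → ℝ))
    (hA1 : A (fun _ => 1) = fun _ => 1)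
    (hAmono : ∀ f g : H → ℝ, f ≤ g → A f ≤ A g)
    (f : ℕ → H → ℝ)
    (hfpos : ∀ i, i ≤ d → ∀ h, 0 < f i h)
    (hf0 : f 0 = fun _ => 1) (hfd : f d = fun _ => 1)
    (a ω : ℝ) (ha : 0 < a) (hω : 0 < ω)
    (havg : ∀ i, 1 ≤ i → i ≤ d - 1 → ∀ h : H,
      ∃ j, 0 < j ∧ j ≤ min (d - i) i ∧
        A (fun h' => f i h' ^ (1 / β i)) h ≤
          a * f i h ^ (1 / β i) +
            ω ^ (2 * (1 / β i)) *
              (Real.sqrt (f (i + j) h * f (i - j) h)) ^ (1 / β i)) :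
    ∀ a' : ℝ, a < a' →
      ∃ (ω' : ℕ → ℝ) (C₀ : ℝ), (∀ i, i ≤ d → 0 < ω' i) ∧ 1 < C₀ ∧
        ∀ h : H,
          A (fun h' => ∑ i ∈ Finset.range (d + 1), (ω' i * f i h') ^ (1 / β i)) h ≤
            a' * (∑ i ∈ Finset.range (d + 1), (ω' i * f i h) ^ (1 / β i)) + C₀ := by
  intro a' haa'
  have hd1 : (1:ℝ) ≤ (d:ℝ) := by exact_mod_cast hd
  have hβnn : ∀ k, k ≤ d → 0 ≤ β k := by
    intro k hk
    rcases Nat.eq_zero_or_pos k with h0 | h0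
    · simp [h0, hβ0]
    rcases eq_or_lt_of_le hk with hkd | hkd
    · simp [hkd, hβd]
    · exact (hβpos k h0 hkd).le
  set B : ℝ := 1 + ∑ k ∈ Finset.range (d+1), β k with hBdef
  have hsumnn : 0 ≤ ∑ k ∈ Finset.range (d+1), β k :=
    Finset.sum_nonneg fun k hk => hβnn k (Nat.lt_succ_iff.mp (Finset.mem_range.mp hk))
  have hBpos : (0:ℝ) < B := by rw [hBdef]; linarith
  have hβleB : ∀ k, k ≤ d → β k ≤ B := by
    intro k hk
    have h1 : β k ≤ ∑ j ∈ Finset.range (d+1), β j :=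
      Finset.single_le_sum (fun j hj => hβnn j (Nat.lt_succ_iff.mp (Finset.mem_range.mp hj)))
        (Finset.mem_range.mpr (by omega))
    rw [hBdef]; linarith
  set ε : ℝ := min 1 ((a' - a) / (2*((d:ℝ)+1))) with hεdef
  have hdR : (0:ℝ) < 2*((d:ℝ)+1) := by positivity
  have hεpos : 0 < ε := lt_min one_pos (div_pos (by linarith) hdR)
  have hε1 : ε ≤ 1 := min_le_left _ _
  have hεle : 2*((d:ℝ)+1)*ε ≤ a' - a := by
    have h1 : ε ≤ (a' - a)/(2*((d:ℝ)+1)) := min_le_right _ _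
    calc 2*((d:ℝ)+1)*ε ≤ 2*((d:ℝ)+1)*((a'-a)/(2*((d:ℝ)+1))) :=
          mul_le_mul_of_nonneg_left h1 hdR.le
      _ = a' - a := by field_simp
  set ρ : ℝ := min 1 (ε ^ B / ω ^ 2) with hρdef
  have hρpos : 0 < ρ := lt_min one_pos (by positivity)
  have hρ1 : ρ ≤ 1 := min_le_left _ _
  have hρkey : ρ^2 * ω^4 ≤ ε ^ (2*B) := by
    have h1 : ρ ≤ ε ^ B / ω ^ 2 := min_le_right _ _
    have h2 : ρ^2 ≤ (ε^B/ω^2)^2 := by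
      have := mul_le_mul h1 h1 hρpos.le (by positivity)
      nlinarith
    have h3 : (ε^B/ω^2)^2 * ω^4 = ε^(2*B) := by
      rw [div_pow, show ((ω:ℝ)^2)^2 = ω^4 by ring,
        div_mul_cancel₀ _ (by positivity : ((ω:ℝ)^4) ≠ 0),
        ← Real.rpow_natCast (ε^B) 2, ← Real.rpow_mul hεpos.le]
      norm_num [mul_comm]
    nlinarith [pow_pos hω 4]
  set ω' : ℕ → ℝ := fun k => ρ ^ (k * (d - k)) with hω'def
  have hω'pos : ∀ k, 0 < ω' k := fun k => pow_pos hρpos _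
  have hω'le1 : ∀ k, ω' k ≤ 1 := fun k => pow_le_one₀ hρpos.le hρ1
  refine ⟨ω', ((d:ℝ)+1)*(ε+1), fun i _ => hω'pos i, by nlinarith, ?_⟩
  intro h
  set g : ℕ → H → ℝ := fun i h' => (ω' i * f i h') ^ (1 / β i) with hgdef
  set F : H → ℝ := fun h' => ∑ i ∈ Finset.range (d+1), g i h' with hFdef
  have hgpos : ∀ i, i ≤ d → ∀ h', 0 < g i h' := by
    intro i hi h'
    exact Real.rpow_pos_of_pos (mul_pos (hω'pos i) (hfpos i hi h')) _
  have hFpos : ∀ h', 0 < F h' := by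
    intro h'
    refine Finset.sum_pos (fun i hi => hgpos i (Nat.lt_succ_iff.mp (Finset.mem_range.mp hi)) h')
      ⟨0, Finset.mem_range.mpr (by omega)⟩
  have hgleF : ∀ i, i ≤ d → ∀ h', g i h' ≤ F h' := by
    intro i hi h'
    exact Finset.single_le_sum
      (fun k hk => (hgpos k (Nat.lt_succ_iff.mp (Finset.mem_range.mp hk)) h').le)
      (Finset.mem_range.mpr (by omega))
  -- rewrite A applied to the sum
  have hAF : A F = ∑ i ∈ Finset.range (d+1), A (g i) := by
    have hF : F = ∑ i ∈ Finset.range (d+1), g i := by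
      funext h'; rw [hFdef]; simp [Finset.sum_apply]
    rw [hF, map_sum]
  -- per-index bound
  have hclaim : ∀ i ∈ Finset.range (d+1),
      A (g i) h ≤ a * g i h + (ε * (2 * F h + 1) + 1) := by
    intro i hi
    have hid : i ≤ d := Nat.lt_succ_iff.mp (Finset.mem_range.mp hi)
    by_cases hend : β i = 0
    · -- endpoint: g i is the constant function 1
      have hgone : g i = fun _ => 1 := by
        funext h'; rw [hgdef]; simp [hend]
      rw [hgone, hA1]
      have h1 : (0:ℝ) < 2 * F h + 1 := by have := hFpos h; linarith
      have : (1:ℝ) ≤ a * 1 + (ε * (2 * F h + 1) + 1) := by nlinarith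
      simpa using this
    -- middle index
    have hi0 : 0 < i := by
      rcases Nat.eq_zero_or_pos i with h0 | h0
      · exact absurd (h0 ▸ hβ0) hend
      · exact h0
    have hiD : i < d := by
      rcases eq_or_lt_of_le hid with h0 | h0
      · exact absurd (h0 ▸ hβd) hend
      · exact h0
    have hβi : 0 < β i := hβpos i hi0 hiD
    obtain ⟨j, hj0, hjle, hbound⟩ := havg i (by omega) (by omega) h
    have hji : j ≤ i := le_trans hjle (min_le_right _ _)
    have hjd : j ≤ d - i := le_trans hjle (min_le_left _ _)
    have hijd : i + j ≤ d := by omega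
    have hijd' : i - j ≤ d := by omega
    set e : ℝ := 1 / (2 * β i) with hedef
    have he : 0 < e := by rw [hedef]; positivity
    -- A (g i) h in terms of A (f i ^ (1/β i))
    have hgi : g i = (ω' i ^ (1/β i)) • (fun h' => f i h' ^ (1/β i)) := by
      funext h'
      rw [hgdef]
      simp only [Pi.smul_apply, smul_eq_mul]
      rw [Real.mul_rpow (hω'pos i).le (hfpos i hid h').le]
    have hAgi : A (g i) h = ω' i ^ (1/β i) * A (fun h' => f i h' ^ (1/β i)) h := by
      rw [hgi, map_smul]; simp
    have hstep1 : A (g i) h ≤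
        a * g i h + (ω' i ^ (1/β i) * ω ^ (2 * (1/β i))) *
          (Real.sqrt (f (i+j) h * f (i-j) h)) ^ (1/β i) := by
      rw [hAgi]
      have := mul_le_mul_of_nonneg_left hbound
        (Real.rpow_nonneg (hω'pos i).le (1/β i))
      calc ω' i ^ (1/β i) * A (fun h' => f i h' ^ (1/β i)) h
          ≤ ω' i ^ (1/β i) * (a * f i h ^ (1 / β i) +
              ω ^ (2 * (1 / β i)) * (Real.sqrt (f (i + j) h * f (i - j) h)) ^ (1 / β i)) :=
            this
        _ = a * (ω' i ^ (1/β i) * f i h ^ (1/β i)) +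
            (ω' i ^ (1/β i) * ω ^ (2 * (1/β i))) *
              (Real.sqrt (f (i+j) h * f (i-j) h)) ^ (1/β i) := by ring
        _ = _ := by
            rw [hgdef]
            rw [← Real.mul_rpow (hω'pos i).le (hfpos i hid h).le]
    -- rewrite the sqrt term
    have hx : 0 < f (i+j) h := hfpos _ hijd h
    have hy : 0 < f (i-j) h := hfpos _ hijd' h
    have hsqrt : (Real.sqrt (f (i+j) h * f (i-j) h)) ^ (1/β i)
        = f (i+j) h ^ e * f (i-j) h ^ e := by
      rw [Real.sqrt_eq_rpow, ← Real.rpow_mul (by positivity)]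
      rw [show 1/(2:ℝ) * (1/β i) = e by rw [hedef]; field_simp]
      rw [Real.mul_rpow hx.le hy.le]
    -- key pointwise bound for the neighbours
    have hkey : ∀ k, k ≤ d → f k h ^ e ≤ ((ω' k)⁻¹) ^ e * (g k h) ^ (β k * e) := by
      intro k hk
      by_cases hβk : β k = 0
      · have hfk : f k h = 1 := by
          have hkor : k = 0 ∨ k = d := by
            by_contra hc
            push_neg at hc
            exact (hβpos k (by omega) (by omega)).ne' hβk
          rcases hkor with h0 | h0
          · rw [h0, hf0]
          · rw [h0, hfd]
        rw [hfk, Real.one_rpow, hβk, zero_mul, Real.rpow_zero, mul_one]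
        have h1 : (1:ℝ) ≤ (ω' k)⁻¹ :=
          one_le_inv_iff₀.mpr ⟨hω'pos k, hω'le1 k⟩
        exact Real.one_le_rpow h1 he.le
      · have hβk' : 0 < β k := lt_of_le_of_ne (hβnn k hk) (Ne.symm hβk)
        have hgk : (g k h) ^ (β k * e) = ω' k ^ e * f k h ^ e := by
          rw [hgdef]
          rw [← Real.rpow_mul (mul_nonneg (hω'pos k).le (hfpos k hk h).le)]
          rw [show 1/β k * (β k * e) = e by field_simp]
          exact Real.mul_rpow (hω'pos k).le (hfpos k hk h).le
        rw [hgk, ← mul_assoc, ← Real.mul_rpow (by positivity) (hω'pos k).le,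
          inv_mul_cancel₀ (hω'pos k).ne', Real.one_rpow, one_mul]
    set s : ℝ := β (i+j) * e with hsdef
    set t : ℝ := β (i-j) * e with htdef
    have hs0 : 0 ≤ s := mul_nonneg (hβnn _ hijd) he.le
    have ht0 : 0 ≤ t := mul_nonneg (hβnn _ hijd') he.le
    have hst : s + t ≤ 1 := by
      have hc := hβconc i j hi0 hiD hj0 (by rw [min_comm]; exact hjle)
      rw [hsdef, htdef, hedef]
      rw [show β (i+j) * (1/(2*β i)) + β (i-j) * (1/(2*β i))
          = (β (i+j) + β (i-j)) / (2*β i) by ring]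
      rw [div_le_one (by positivity)]
      linarith
    set u : ℝ := g (i+j) h with hudef
    set v : ℝ := g (i-j) h with hvdef
    have hu : 0 < u := hgpos _ hijd h
    have hv : 0 < v := hgpos _ hijd' h
    have hyoung : u ^ s * v ^ t ≤ u + v + 1 := by
      have h3 := Real.geom_mean_le_arith_mean3_weighted hs0 ht0
        (by linarith : (0:ℝ) ≤ 1 - s - t) hu.le hv.le zero_le_one (by ring)
      rw [Real.one_rpow, mul_one] at h3
      nlinarith [mul_nonneg (by linarith : (0:ℝ) ≤ 1 - s) hu.le,
        mul_nonneg (by linarith : (0:ℝ) ≤ 1 - t) hv.le]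
    -- coefficient bound
    have h2e : 1/β i = 2*e := by rw [hedef]; field_simp
    have hcoef : (ω' i ^ (1/β i) * ω ^ (2 * (1/β i))) *
        (((ω' (i+j))⁻¹) ^ e * ((ω' (i-j))⁻¹) ^ e) ≤ ε := by
      have hb1 : ω' i ^ (1/β i) = (ω' i ^ 2) ^ e := by
        rw [h2e, Real.rpow_mul (hω'pos i).le]
        norm_num [Real.rpow_natCast]
      have hb2 : ω ^ (2 * (1/β i)) = (ω ^ 4) ^ e := by
        rw [h2e, show (2:ℝ) * (2*e) = 4 * e by ring, Real.rpow_mul hω.le]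
        rw [show ((4:ℝ)) = ((4:ℕ):ℝ) by norm_num, Real.rpow_natCast]
      rw [hb1, hb2,
        ← Real.mul_rpow (by positivity) (by positivity),
        ← Real.mul_rpow (by positivity) (by positivity),
        ← Real.mul_rpow (by positivity) (by positivity)]
      rw [show ω' i ^ 2 * ω ^ 4 * ((ω' (i+j))⁻¹ * (ω' (i-j))⁻¹)
          = ω' i ^ 2 * ω ^ 4 * (ω' (i+j))⁻¹ * (ω' (i-j))⁻¹ from by ring]
      -- base computation
      have hnat : (i+j)*(d-(i+j)) + (i-j)*(d-(i-j)) + 2*(j*j) = 2*(i*(d-i)) := by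
        zify [hijd, hijd', hji, hid, Nat.sub_le d i]
        ring
      have hbase : ω' i ^ 2 = ω' (i+j) * ω' (i-j) * ρ^(2*(j*j)) := by
        rw [hω'def]
        simp only
        rw [← pow_mul, ← pow_add, ← pow_add]
        congr 1
        rw [mul_comm]
        omega
      have hρj : ρ^(2*(j*j)) ≤ ρ^2 := by
        apply pow_le_pow_of_le_one hρpos.le hρ1
        nlinarith [hj0]
      have hbase2 : ω' i ^ 2 * ω ^ 4 * (ω' (i+j))⁻¹ * (ω' (i-j))⁻¹
          = ρ^(2*(j*j)) * ω^4 := by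
        rw [hbase]
        field_simp
        field_simp [(hω'pos (i+j)).ne', (hω'pos (i-j)).ne']
      have hbase3 : ω' i ^ 2 * ω ^ 4 * (ω' (i+j))⁻¹ * (ω' (i-j))⁻¹ ≤ ε ^ (2*B) := by
        rw [hbase2]
        calc ρ^(2*(j*j)) * ω^4 ≤ ρ^2 * ω^4 :=
              mul_le_mul_of_nonneg_right hρj (by positivity)
          _ ≤ ε ^ (2*B) := hρkey
      calc (ω' i ^ 2 * (ω ^ 4) * (ω' (i+j))⁻¹ * (ω' (i-j))⁻¹) ^ e
          ≤ (ε ^ (2*B)) ^ e := by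
            apply Real.rpow_le_rpow (by positivity) hbase3 he.le
        _ = ε ^ (2*B*e) := by rw [← Real.rpow_mul hεpos.le]
        _ ≤ ε ^ (1:ℝ) := by
            apply Real.rpow_le_rpow_of_exponent_ge hεpos hε1
            rw [hedef]
            rw [show 2*B*(1/(2*β i)) = B / β i by field_simp]
            rw [le_div_iff₀ hβi]
            simpa using hβleB i hid
        _ = ε := Real.rpow_one ε
    -- combine
    have hprod : f (i+j) h ^ e * f (i-j) h ^ e ≤
        (((ω' (i+j))⁻¹) ^ e * ((ω' (i-j))⁻¹) ^ e) * (u ^ s * v ^ t) := by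
      have h1 := hkey (i+j) hijd
      have h2 := hkey (i-j) hijd'
      calc f (i+j) h ^ e * f (i-j) h ^ e
          ≤ (((ω' (i+j))⁻¹) ^ e * (g (i+j) h) ^ (β (i+j) * e)) *
            (((ω' (i-j))⁻¹) ^ e * (g (i-j) h) ^ (β (i-j) * e)) := by
            apply mul_le_mul h1 h2 (Real.rpow_nonneg hy.le e) (by positivity)
        _ = (((ω' (i+j))⁻¹) ^ e * ((ω' (i-j))⁻¹) ^ e) * (u ^ s * v ^ t) := by
            rw [hudef, hvdef, hsdef, htdef]; ring
    have hcross : (ω' i ^ (1/β i) * ω ^ (2 * (1/β i))) *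
        (Real.sqrt (f (i+j) h * f (i-j) h)) ^ (1/β i) ≤ ε * (2 * F h + 1) := by
      rw [hsqrt]
      set c0 : ℝ := ω' i ^ (1/β i) * ω ^ (2 * (1/β i)) with hc0def
      have hc0 : 0 ≤ c0 := by rw [hc0def]; positivity
      set K : ℝ := ((ω' (i+j))⁻¹) ^ e * ((ω' (i-j))⁻¹) ^ e with hKdef
      have hK : 0 ≤ K := by rw [hKdef]; positivity
      calc c0 * (f (i+j) h ^ e * f (i-j) h ^ e)
          ≤ c0 * (K * (u ^ s * v ^ t)) := mul_le_mul_of_nonneg_left hprod hc0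
        _ = (c0 * K) * (u ^ s * v ^ t) := by ring
        _ ≤ ε * (u + v + 1) := by
            apply mul_le_mul hcoef hyoung (by positivity) hεpos.le
        _ ≤ ε * (2 * F h + 1) := by
            have h1 : u ≤ F h := hgleF _ hijd h
            have h2 : v ≤ F h := hgleF _ hijd' h
            apply mul_le_mul_of_nonneg_left _ hεpos.le
            linarith
    calc A (g i) h ≤ a * g i h + (ω' i ^ (1/β i) * ω ^ (2 * (1/β i))) *
          (Real.sqrt (f (i+j) h * f (i-j) h)) ^ (1/β i) := hstep1
      _ ≤ a * g i h + ε * (2 * F h + 1) := by linarith [hcross]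
      _ ≤ a * g i h + (ε * (2 * F h + 1) + 1) := by linarith
  -- sum up
  show A F h ≤ a' * F h + ((d:ℝ)+1)*(ε+1)
  have hsum : A F h ≤ ∑ i ∈ Finset.range (d+1), (a * g i h + (ε * (2 * F h + 1) + 1)) := by
    rw [hAF, Finset.sum_apply]
    exact Finset.sum_le_sum hclaim
  have hsum2 : ∑ i ∈ Finset.range (d+1), (a * g i h + (ε * (2 * F h + 1) + 1))
      = a * F h + ((d:ℝ)+1) * (ε * (2 * F h + 1) + 1) := by
    rw [Finset.sum_add_distrib, ← Finset.mul_sum, Finset.sum_const, Finset.card_range,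
      nsmul_eq_mul]
    push_cast
    rw [hFdef]
  have hF := hFpos h
  rw [hsum2] at hsum
  nlinarith [hεle, hF, hεpos]
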